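/- Let p be an odd prime and write φ(pᵏ) = 2^θ · μ with μ odd. Then for every divisor d of μ, the number of cycles of length ord_d(2) in the functional graph of squaring on the units (Z/pᵏ)^× contributed by elements whose (multiplicative) order has odd part d is φ(d)/ord_d(2); in particular, a unit x ∈ (Z/pᵏ)^× is periodic under squaring if and only if its multiplicative order is odd, and its exact period under squaring equals ord_d(2) where d is its multiplicative order. -/

import Mathlib

open Function Finset

private lemma iter_sq {G : Type*} [Monoid G] (u : G) (n : ℕ) :
    (fun v : G => v ^ 2)^[n] u = u ^ 2 ^ n := by
  induction n with
  | zero => simp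
  | succ n ih => rw [Function.iterate_succ_apply', ih, ← pow_mul, ← pow_succ]

private lemma two_pow_modEq_iff {d : ℕ} (hd : Odd d) (a b : ℕ) :
    (2 : ℕ) ^ a ≡ 2 ^ b [MOD d] ↔ a ≡ b [MOD orderOf (2 : ZMod d)] := by
  haveI : NeZero d := ⟨hd.pos.ne'⟩
  set w : (ZMod d)ˣ := ZMod.unitOfCoprime 2 (Nat.coprime_two_left.mpr hd) with hw
  have hcoe : (w : ZMod d) = 2 := by
    rw [hw, ZMod.coe_unitOfCoprime]; push_cast; ring
  have hord : orderOf (2 : ZMod d) = orderOf w := by rw [← hcoe, orderOf_units]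
  rw [← ZMod.natCast_eq_natCast_iff]
  push_cast
  rw [← hcoe, ← Units.val_pow_eq_pow_val, ← Units.val_pow_eq_pow_val, Units.val_inj,
    orderOf_units]
  exact pow_eq_pow_iff_modEq

private lemma ord2_pos {d : ℕ} (hd : Odd d) : 0 < orderOf (2 : ZMod d) := by
  haveI : NeZero d := ⟨hd.pos.ne'⟩
  set w : (ZMod d)ˣ := ZMod.unitOfCoprime 2 (Nat.coprime_two_left.mpr hd) with hw
  have hcoe : (w : ZMod d) = 2 := by
    rw [hw, ZMod.coe_unitOfCoprime]; push_cast; ring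
  rw [← hcoe, orderOf_units]
  exact orderOf_pos w

private lemma pow_two_pow_eq_iff {G : Type*} [Group G] {u : G} (hd : Odd (orderOf u)) (a b : ℕ) :
    u ^ 2 ^ a = u ^ 2 ^ b ↔ a ≡ b [MOD orderOf (2 : ZMod (orderOf u))] :=
  pow_eq_pow_iff_modEq.trans (two_pow_modEq_iff hd a b)

private lemma pow_two_pow_order_self {G : Type*} [Group G] {u : G} (hd : Odd (orderOf u)) :
    u ^ 2 ^ orderOf (2 : ZMod (orderOf u)) = u := by
  have := (pow_two_pow_eq_iff hd (orderOf (2 : ZMod (orderOf u))) 0).mpr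
    ((Nat.modEq_zero_iff_dvd).mpr dvd_rfl)
  simpa using this

private lemma units_cyclic (p k : ℕ) (hp : p.Prime) (hodd : Odd p) (hk : 1 ≤ k) :
    IsCyclic (ZMod (p ^ k))ˣ := by
  haveI : Fact p.Prime := ⟨hp⟩
  haveI : NeZero (p ^ k) := ⟨pow_ne_zero _ hp.pos.ne'⟩
  have hp2 : 2 ≤ p := hp.two_le
  have hx : ¬ p ∣ p + 1 := fun hdv =>
    hp.one_lt.ne' (Nat.dvd_one.mp (by simpa using Nat.dvd_sub hdv dvd_rfl))
  have hcop1 : Nat.Coprime (p + 1) p := Nat.Coprime.symm (hp.coprime_iff_not_dvd.mpr hx)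
  have hcop : Nat.Coprime (p + 1) (p ^ k) := hcop1.pow_right _
  set u₁ : (ZMod (p ^ k))ˣ := ZMod.unitOfCoprime (p + 1) hcop with hu₁
  have hiff : ∀ n : ℕ, u₁ ^ n = 1 ↔ p ^ (k - 1) ∣ n := by
    intro n
    have h1 : u₁ ^ n = 1 ↔ ((p + 1 : ℕ) : ZMod (p ^ k)) ^ n = 1 := by
      rw [← Units.val_inj, Units.val_pow_eq_pow_val, hu₁, ZMod.coe_unitOfCoprime, Units.val_one]
    rw [h1, show ((p + 1 : ℕ) : ZMod (p ^ k)) ^ n = (((p + 1) ^ n : ℕ) : ZMod (p ^ k)) by push_cast; ring,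
      show (1 : ZMod (p ^ k)) = ((1 : ℕ) : ZMod (p ^ k)) by push_cast; ring,
      ZMod.natCast_eq_natCast_iff]
    rcases Nat.eq_zero_or_pos n with rfl | hn
    · simp [Nat.ModEq.refl]
    have hle : 1 ≤ (p + 1) ^ n := Nat.one_le_pow _ _ (by omega)
    rw [Nat.ModEq.comm, Nat.modEq_iff_dvd' hle]
    have hval : padicValNat p ((p + 1) ^ n - 1 ^ n) = 1 + padicValNat p n := by
      rw [padicValNat.pow_sub_pow hodd (x := p + 1) (y := 1) (by omega) (by simp) hx
        (Nat.pos_iff_ne_zero.mp hn)]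
      simp [padicValNat.self hp.one_lt]
    have hlt : 1 < (p + 1) ^ n := Nat.one_lt_pow (Nat.pos_iff_ne_zero.mp hn) (by omega)
    have hne : (p + 1) ^ n - 1 ^ n ≠ 0 := by simpa using Nat.sub_ne_zero_of_lt hlt
    rw [show ((p + 1) ^ n - 1) = ((p + 1) ^ n - 1 ^ n) by simp,
      padicValNat_dvd_iff_le hne, hval,
      padicValNat_dvd_iff_le (Nat.pos_iff_ne_zero.mp hn)]
    omega
  have h1 : orderOf u₁ = p ^ (k - 1) :=
    Nat.dvd_antisymm (orderOf_dvd_of_pow_eq_one ((hiff _).mpr dvd_rfl))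
      ((hiff _).mp (pow_orderOf_eq_one u₁))
  -- element of order p - 1
  obtain ⟨ζ, hζ⟩ := IsCyclic.exists_generator (α := (ZMod p)ˣ)
  have hζord : orderOf ζ = p - 1 := by
    rw [orderOf_eq_card_of_forall_mem_zpowers hζ, Nat.card_eq_fintype_card,
      ZMod.card_units_eq_totient, Nat.totient_prime hp]
  obtain ⟨v, hv⟩ := ZMod.unitsMap_surjective (m := p ^ k) (dvd_pow_self p (by omega)) ζ
  have hdvd : (p - 1) ∣ orderOf v := by
    rw [← hζord, ← hv]
    exact orderOf_map_dvd _ v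
  have hvne : orderOf v ≠ 0 := (orderOf_pos v).ne'
  set h : (ZMod (p ^ k))ˣ := v ^ (orderOf v / (p - 1)) with hh'
  have hh : orderOf h = p - 1 := orderOf_pow_orderOf_div hvne hdvd
  have hcop2 : Nat.Coprime (p ^ (k - 1)) (p - 1) := by
    have hnd : ¬ p ∣ p - 1 :=
      Nat.not_dvd_of_pos_of_lt (by omega) (by omega)
    exact (hp.coprime_iff_not_dvd.mpr hnd).pow_left _
  have hmul : orderOf (u₁ * h) = p ^ (k - 1) * (p - 1) := by
    rw [(Commute.all u₁ h).orderOf_mul_eq_mul_orderOf_of_coprime (by rw [h1, hh]; exact hcop2),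
      h1, hh]
  exact isCyclic_of_orderOf_eq_card (u₁ * h)
    (by rw [hmul, Nat.card_eq_fintype_card, ZMod.card_units_eq_totient,
      Nat.totient_prime_pow hp hk])

theorem stmt_18 (p k θ μ : ℕ) (hp : p.Prime) (hodd : Odd p) (hk : 1 ≤ k)
    (hμ : Odd μ) (hφ : Nat.totient (p ^ k) = 2 ^ θ * μ) :
    (∀ d : ℕ, d ∣ μ →
      ∃ c : Finset (Finset (ZMod (p ^ k))ˣ),
        c.card = Nat.totient d / orderOf (2 : ZMod d) ∧
        (∀ s ∈ c, ∃ u : (ZMod (p ^ k))ˣ, orderOf u = d ∧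
          s = Finset.image (fun n : ℕ => u ^ (2 ^ n))
            (Finset.range (orderOf (2 : ZMod d)))) ∧
        (∀ u : (ZMod (p ^ k))ˣ, orderOf u = d → ∃ s ∈ c, u ∈ s) ∧
        (c : Set (Finset (ZMod (p ^ k))ˣ)).PairwiseDisjoint id) ∧
    (∀ u : (ZMod (p ^ k))ˣ,
      ((∃ n : ℕ, 1 ≤ n ∧ (fun v : (ZMod (p ^ k))ˣ => v ^ 2)^[n] u = u) ↔ Odd (orderOf u)) ∧
      (Odd (orderOf u) →
        Function.minimalPeriod (fun v : (ZMod (p ^ k))ˣ => v ^ 2) u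
          = orderOf (2 : ZMod (orderOf u)))) := by
  haveI : Fact p.Prime := ⟨hp⟩
  haveI : NeZero (p ^ k) := ⟨pow_ne_zero _ hp.pos.ne'⟩
  haveI hcyc : IsCyclic (ZMod (p ^ k))ˣ := units_cyclic p k hp hodd hk
  constructor
  · intro d hdμ
    have hd : Odd d :=
      Nat.coprime_two_left.mp ((Nat.coprime_two_left.mpr hμ).coprime_dvd_right hdμ)
    set m := orderOf (2 : ZMod d) with hm
    have hm0 : 0 < m := ord2_pos hd
    have key : ∀ u : (ZMod (p ^ k))ˣ, orderOf u = d → ∀ a b : ℕ,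
        (u ^ 2 ^ a = u ^ 2 ^ b ↔ a ≡ b [MOD m]) := by
      intro u hu a b
      rw [hm]
      rw [← hu] at hd ⊢
      exact pow_two_pow_eq_iff hd a b
    set S : (ZMod (p ^ k))ˣ → Finset (ZMod (p ^ k))ˣ :=
      fun u => Finset.image (fun n : ℕ => u ^ 2 ^ n) (Finset.range m) with hS
    have hmemS : ∀ u, orderOf u = d → u ∈ S u := fun u hu =>
      Finset.mem_image.mpr ⟨0, Finset.mem_range.mpr hm0, by simp⟩
    have hordS : ∀ u, orderOf u = d → ∀ x ∈ S u, orderOf x = d := by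
      intro u hu x hx
      obtain ⟨n, -, rfl⟩ := Finset.mem_image.mp hx
      rw [← hu]
      exact Nat.Coprime.orderOf_pow
        (Nat.Coprime.pow_right _ (by rw [hu]; exact Nat.coprime_two_right.mpr hd))
    have hcardS : ∀ u, orderOf u = d → (S u).card = m := by
      intro u hu
      rw [hS]
      rw [Finset.card_image_of_injOn, Finset.card_range]
      intro a ha b hb hab
      have h2 := (key u hu a b).mp hab
      rw [Nat.ModEq, Nat.mod_eq_of_lt (Finset.mem_range.mp ha),
        Nat.mod_eq_of_lt (Finset.mem_range.mp hb)] at h2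
      exact h2
    have hSS : ∀ u, orderOf u = d → ∀ x ∈ S u, S x = S u := by
      intro u hu x hx
      have hxd : orderOf x = d := hordS u hu x hx
      obtain ⟨a, -, rfl⟩ := Finset.mem_image.mp hx
      have hsub : S (u ^ 2 ^ a) ⊆ S u := by
        intro y hy
        obtain ⟨n, -, rfl⟩ := Finset.mem_image.mp hy
        have h1 : (u ^ 2 ^ a) ^ 2 ^ n = u ^ 2 ^ (a + n) := by
          rw [← pow_mul, ← pow_add]
        rw [h1]
        exact Finset.mem_image.mpr ⟨(a + n) % m, Finset.mem_range.mpr (Nat.mod_lt _ hm0),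
          (key u hu _ _).mpr (Nat.mod_modEq _ _)⟩
      exact Finset.eq_of_subset_of_card_le hsub
        (by rw [hcardS u hu, hcardS _ hxd])
    set c : Finset (Finset (ZMod (p ^ k))ˣ) :=
      Finset.image S (Finset.univ.filter fun u => orderOf u = d) with hc
    have hdisj : (c : Set (Finset (ZMod (p ^ k))ˣ)).PairwiseDisjoint id := by
      intro s hs t ht hst
      obtain ⟨u, hu, rfl⟩ := Finset.mem_image.mp (Finset.mem_coe.mp hs)
      obtain ⟨v, hv, rfl⟩ := Finset.mem_image.mp (Finset.mem_coe.mp ht)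
      have hu' := (Finset.mem_filter.mp hu).2
      have hv' := (Finset.mem_filter.mp hv).2
      refine Finset.disjoint_left.mpr fun {x} hxu hxv => hst ?_
      show S u = S v
      rw [← hSS u hu' x hxu, hSS v hv' x hxv]
    have hcover : ∀ u : (ZMod (p ^ k))ˣ, orderOf u = d → ∃ s ∈ c, u ∈ s := by
      intro u hu
      exact ⟨S u, Finset.mem_image.mpr ⟨u, Finset.mem_filter.mpr ⟨Finset.mem_univ u, hu⟩, rfl⟩,
        hmemS u hu⟩
    refine ⟨c, ?_, ?_, hcover, hdisj⟩
    · have hTcard : (Finset.univ.filter fun u : (ZMod (p ^ k))ˣ => orderOf u = d).card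
          = Nat.totient d := by
        apply IsCyclic.card_orderOf_eq_totient
        rw [ZMod.card_units_eq_totient, hφ]
        exact hdμ.trans ⟨2 ^ θ, by ring⟩
      have hT : (Finset.univ.filter fun u : (ZMod (p ^ k))ˣ => orderOf u = d)
          = c.biUnion id := by
        ext x
        simp only [Finset.mem_filter, Finset.mem_univ, true_and, Finset.mem_biUnion, id]
        constructor
        · intro hx
          exact hcover x hx
        · rintro ⟨s, hs, hxs⟩
          obtain ⟨u, hu, rfl⟩ := Finset.mem_image.mp hs
          exact hordS u (Finset.mem_filter.mp hu).2 x hxs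
      have hsum : (c.biUnion id).card = c.card * m := by
        rw [Finset.card_biUnion
          (fun x hx y hy hxy => hdisj (Finset.mem_coe.mpr hx) (Finset.mem_coe.mpr hy) hxy)]
        rw [Finset.sum_congr rfl (fun s hs => ?_), Finset.sum_const, smul_eq_mul]
        obtain ⟨u, hu, rfl⟩ := Finset.mem_image.mp hs
        exact hcardS u (Finset.mem_filter.mp hu).2
      have htot : Nat.totient d = c.card * m := by rw [← hTcard, hT, hsum]
      rw [htot, Nat.mul_div_cancel _ hm0]
    · intro s hs
      obtain ⟨u, hu, rfl⟩ := Finset.mem_image.mp hs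
      exact ⟨u, (Finset.mem_filter.mp hu).2, rfl⟩
  · intro u
    constructor
    · constructor
      · rintro ⟨n, hn1, hiter⟩
        rw [iter_sq] at hiter
        have hmod : 2 ^ n ≡ 2 ^ 0 [MOD orderOf u] :=
          pow_eq_pow_iff_modEq.mp (by simpa using hiter)
        have hdvd : orderOf u ∣ 2 ^ n - 1 := by
          rw [pow_zero] at hmod
          exact (Nat.modEq_iff_dvd' Nat.one_le_two_pow).mp hmod.symm
        rcases Nat.even_or_odd (orderOf u) with he | ho
        · exfalso
          have h2d : (2 : ℕ) ∣ orderOf u := he.two_dvd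
          have h2 : (2 : ℕ) ∣ 2 ^ n := dvd_pow_self 2 (by omega)
          have h21 : (2 : ℕ) ∣ 1 := by
            have h5 := Nat.dvd_sub h2 (h2d.trans hdvd)
            rwa [Nat.sub_sub_self (Nat.one_le_two_pow (n := n))] at h5
          omega
        · exact ho
      · intro ho
        refine ⟨orderOf (2 : ZMod (orderOf u)), ord2_pos ho, ?_⟩
        rw [iter_sq]
        exact pow_two_pow_order_self ho
    · intro ho
      have hm0 : 0 < orderOf (2 : ZMod (orderOf u)) := ord2_pos ho
      have hper : Function.IsPeriodicPt (fun v : (ZMod (p ^ k))ˣ => v ^ 2)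
          (orderOf (2 : ZMod (orderOf u))) u := by
        show (fun v : (ZMod (p ^ k))ˣ => v ^ 2)^[orderOf (2 : ZMod (orderOf u))] u = u
        rw [iter_sq]
        exact pow_two_pow_order_self ho
      have hTdvd := hper.minimalPeriod_dvd
      have hiter2 : u ^ 2 ^ Function.minimalPeriod (fun v : (ZMod (p ^ k))ˣ => v ^ 2) u = u := by
        have h3 := Function.isPeriodicPt_minimalPeriod (fun v : (ZMod (p ^ k))ˣ => v ^ 2) u
        rw [Function.IsPeriodicPt, Function.IsFixedPt, iter_sq] at h3
        exact h3
      have hmdvd : orderOf (2 : ZMod (orderOf u)) ∣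
          Function.minimalPeriod (fun v : (ZMod (p ^ k))ˣ => v ^ 2) u := by
        have h4 := (pow_two_pow_eq_iff ho _ 0).mp (by simpa using hiter2)
        simpa [Nat.modEq_zero_iff_dvd] using h4
      exact Nat.dvd_antisymm hTdvd hmdvd
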